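/- In distributed softmax regression where each of R regular workers only has samples from one class (and classes are disjoint across workers), evaluating at x = 0 yields ξ ≥ (1 − 1/R)(1 − 1/K) · max_{w∈R} ‖(1/J)Σ_{j=1}^J a^{(w,j)}‖, where ξ is any constant such that ‖∇f_w(x) − ∇f(x)‖ ≤ ξ for all x and all w ∈ R, assuming non-negative features. -/

import Mathlib

open InnerProductSpace

/-- The per-sample softmax (cross-entropy) loss. -/
noncomputable def softmaxLoss (K d : ℕ) (a : EuclideanSpace ℝ (Fin d)) (b : Fin K)
    (x : EuclideanSpace ℝ (Fin K × Fin d)) : ℝ :=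
  Real.log (∑ l : Fin K, Real.exp (∑ i : Fin d, x (l, i) * a i)) -
    ∑ i : Fin d, x (b, i) * a i

/-- The local cost of a worker with `J` samples `(a j, b j)`. -/
noncomputable def localCost (K d J : ℕ) (a : Fin J → EuclideanSpace ℝ (Fin d))
    (b : Fin J → Fin K) (x : EuclideanSpace ℝ (Fin K × Fin d)) : ℝ :=
  (J : ℝ)⁻¹ * ∑ j : Fin J, softmaxLoss K d (a j) (b j) x

noncomputable def vecOf (K d : ℕ) (a : EuclideanSpace ℝ (Fin d)) (c : Fin K) :
    EuclideanSpace ℝ (Fin K × Fin d) :=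
  WithLp.toLp 2 fun (p : Fin K × Fin d) => if p.1 = c then a p.2 else 0

lemma euc_sum_apply {n : Type*} [Fintype n] {ι : Type*} (s : Finset ι)
    (f : ι → EuclideanSpace ℝ n) (p : n) :
    (∑ i ∈ s, f i) p = ∑ i ∈ s, f i p := by
  rw [WithLp.ofLp_sum]; exact Finset.sum_apply p s _

lemma vecOf_apply {K d : ℕ} (a : EuclideanSpace ℝ (Fin d)) (c : Fin K) (p) :
    vecOf K d a c p = if p.1 = c then a p.2 else 0 := rfl

lemma euc_norm_sq {n : Type*} [Fintype n] (x : EuclideanSpace ℝ n) :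
    ‖x‖ ^ 2 = ∑ i, x i ^ 2 := by
  rw [EuclideanSpace.norm_eq, Real.sq_sqrt (by positivity)]
  simp [Real.norm_eq_abs, sq_abs]

lemma toDual_vecOf_apply {K d : ℕ} (a : EuclideanSpace ℝ (Fin d)) (c : Fin K)
    (x : EuclideanSpace ℝ (Fin K × Fin d)) :
    toDual ℝ _ (vecOf K d a c) x = ∑ i : Fin d, x (c, i) * a i := by
  simp only [toDual_apply_apply, PiLp.inner_apply, RCLike.inner_apply, conj_trivial, vecOf]
  rw [Fintype.sum_prod_type]
  simp [Finset.sum_ite_eq', mul_comm]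

lemma grad_softmax {K d : ℕ} (hK : K ≠ 0) (a : EuclideanSpace ℝ (Fin d)) (b : Fin K) :
    HasGradientAt (softmaxLoss K d a b)
      ((K:ℝ)⁻¹ • ∑ l : Fin K, vecOf K d a l - vecOf K d a b) 0 := by
  rw [hasGradientAt_iff_hasFDerivAt]
  have hfun : softmaxLoss K d a b = fun x =>
      Real.log (∑ l : Fin K, Real.exp (toDual ℝ _ (vecOf K d a l) x)) -
        toDual ℝ _ (vecOf K d a b) x := by
    funext x
    simp only [softmaxLoss, toDual_vecOf_apply]
  rw [hfun]
  have h1 : HasFDerivAt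
      (fun x : EuclideanSpace ℝ (Fin K × Fin d) =>
        ∑ l : Fin K, Real.exp ((toDual ℝ _ (vecOf K d a l)) x))
      (∑ l : Fin K, (toDual ℝ _ (vecOf K d a l) : _ →L[ℝ] ℝ)) 0 := by
    have := HasFDerivAt.fun_sum (u := Finset.univ)
      (fun l (_ : l ∈ Finset.univ) =>
        (Real.hasDerivAt_exp ((toDual ℝ _ (vecOf K d a l)) (0 : EuclideanSpace ℝ (Fin K × Fin d)))).comp_hasFDerivAt
          0 (toDual ℝ _ (vecOf K d a l)).hasFDerivAt)
    simpa [Function.comp] using this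
  have hval : (∑ l : Fin K, Real.exp ((toDual ℝ _ (vecOf K d a l))
      (0 : EuclideanSpace ℝ (Fin K × Fin d)))) = (K : ℝ) := by
    simp
  have h2 : HasDerivAt Real.log ((K:ℝ))⁻¹
      (∑ l : Fin K, Real.exp ((toDual ℝ _ (vecOf K d a l))
        (0 : EuclideanSpace ℝ (Fin K × Fin d)))) := by
    rw [hval]; exact Real.hasDerivAt_log (Nat.cast_ne_zero.mpr hK)
  have h3 := (h2.comp_hasFDerivAt 0 h1).sub (toDual ℝ _ (vecOf K d a b)).hasFDerivAt
  have heq : toDual ℝ (EuclideanSpace ℝ (Fin K × Fin d))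
      ((K:ℝ)⁻¹ • ∑ l : Fin K, vecOf K d a l - vecOf K d a b) =
      (K:ℝ)⁻¹ • (∑ l : Fin K, (toDual ℝ _ (vecOf K d a l) : _ →L[ℝ] ℝ)) -
        toDual ℝ _ (vecOf K d a b) := by
    simp [map_sub, map_smul, map_sum]
  rw [heq]
  exact h3

noncomputable def gw (K d J : ℕ) (aa : Fin J → EuclideanSpace ℝ (Fin d)) (b : Fin K) :
    EuclideanSpace ℝ (Fin K × Fin d) :=
  (J:ℝ)⁻¹ • ∑ j : Fin J, ((K:ℝ)⁻¹ • ∑ l : Fin K, vecOf K d (aa j) l - vecOf K d (aa j) b)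

lemma grad_localCost {K d J : ℕ} (hK : K ≠ 0)
    (aa : Fin J → EuclideanSpace ℝ (Fin d)) (b : Fin K) :
    HasGradientAt (localCost K d J aa (fun _ => b)) (gw K d J aa b) 0 := by
  rw [hasGradientAt_iff_hasFDerivAt]
  have hsum : HasFDerivAt
      (fun x : EuclideanSpace ℝ (Fin K × Fin d) => ∑ j : Fin J, softmaxLoss K d (aa j) b x)
      (∑ j : Fin J, (toDual ℝ _ ((K:ℝ)⁻¹ • ∑ l : Fin K, vecOf K d (aa j) l - vecOf K d (aa j) b)
        : _ →L[ℝ] ℝ)) 0 :=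
    HasFDerivAt.fun_sum fun j _ => hasGradientAt_iff_hasFDerivAt.mp (grad_softmax hK (aa j) b)
  have h := hsum.const_mul ((J:ℝ)⁻¹)
  have heq : (toDual ℝ (EuclideanSpace ℝ (Fin K × Fin d))) (gw K d J aa b) =
      (J:ℝ)⁻¹ • ∑ j : Fin J, (toDual ℝ _
        ((K:ℝ)⁻¹ • ∑ l : Fin K, vecOf K d (aa j) l - vecOf K d (aa j) b) : _ →L[ℝ] ℝ) := by
    simp [gw, map_smul, map_sum]
  rw [heq]
  exact h

lemma grad_global {K d J Wn : ℕ} (hK : K ≠ 0) (Reg : Finset (Fin Wn))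
    (a : Fin Wn → Fin J → EuclideanSpace ℝ (Fin d)) (cls : Fin Wn → Fin K) :
    HasGradientAt (fun z => (Reg.card : ℝ)⁻¹ *
        ∑ v ∈ Reg, localCost K d J (a v) (fun _ => cls v) z)
      ((Reg.card:ℝ)⁻¹ • ∑ v ∈ Reg, gw K d J (a v) (cls v)) 0 := by
  rw [hasGradientAt_iff_hasFDerivAt]
  have hsum : HasFDerivAt
      (fun z : EuclideanSpace ℝ (Fin K × Fin d) =>
        ∑ v ∈ Reg, localCost K d J (a v) (fun _ => cls v) z)
      (∑ v ∈ Reg, (toDual ℝ _ (gw K d J (a v) (cls v)) : _ →L[ℝ] ℝ)) 0 :=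
    HasFDerivAt.fun_sum fun v _ => hasGradientAt_iff_hasFDerivAt.mp (grad_localCost hK (a v) (cls v))
  have h := hsum.const_mul ((Reg.card:ℝ)⁻¹)
  have heq : (toDual ℝ (EuclideanSpace ℝ (Fin K × Fin d)))
      ((Reg.card:ℝ)⁻¹ • ∑ v ∈ Reg, gw K d J (a v) (cls v)) =
      (Reg.card:ℝ)⁻¹ • ∑ v ∈ Reg, (toDual ℝ _ (gw K d J (a v) (cls v)) : _ →L[ℝ] ℝ) := by
    simp [map_smul, map_sum]
  rw [heq]
  exact h

lemma gw_apply {K d J : ℕ} (aa : Fin J → EuclideanSpace ℝ (Fin d)) (b : Fin K) (p) :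
    gw K d J aa b p =
      ((K:ℝ)⁻¹ - if p.1 = b then 1 else 0) * ((J:ℝ)⁻¹ * ∑ j : Fin J, aa j p.2) := by
  simp only [gw, PiLp.smul_apply, PiLp.sub_apply, euc_sum_apply, vecOf_apply, smul_eq_mul,
    Finset.sum_ite_eq, Finset.mem_univ, if_true]
  rw [Finset.mul_sum, Finset.mul_sum, Finset.mul_sum]
  congr 1; funext j
  by_cases h : p.1 = b <;> simp [h] <;> ring

/-- in distributed softmax regression with non-negative features where each
regular worker `w ∈ Reg` only has samples from one class `cls w` and classes are disjoint
across workers (`cls` injective on `Reg`), any constant `ξ` with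
`‖∇f_w(x) − ∇f(x)‖ ≤ ξ` for all `x` and all `w ∈ Reg` satisfies
`ξ ≥ (1 − 1/R)(1 − 1/K) · max_{w ∈ Reg} ‖(1/J) Σ_j a^{(w,j)}‖`. -/
theorem stmt_7 (K d J Wn : ℕ) (hJ : 1 ≤ J)
    (Reg : Finset (Fin Wn)) (hReg : Reg.Nonempty)
    (a : Fin Wn → Fin J → EuclideanSpace ℝ (Fin d))
    (cls : Fin Wn → Fin K)
    (hcls : ∀ w ∈ Reg, ∀ w' ∈ Reg, cls w = cls w' → w = w')
    (ha : ∀ w j i, 0 ≤ a w j i)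
    (ξ : ℝ)
    (hξ : ∀ x : EuclideanSpace ℝ (Fin K × Fin d), ∀ w ∈ Reg,
      ‖gradient (localCost K d J (a w) (fun _ => cls w)) x -
          gradient (fun z => (Reg.card : ℝ)⁻¹ *
            ∑ v ∈ Reg, localCost K d J (a v) (fun _ => cls v) z) x‖ ≤ ξ) :
    (1 - (Reg.card : ℝ)⁻¹) * (1 - (K : ℝ)⁻¹) *
      Reg.sup' hReg (fun w => ‖(J : ℝ)⁻¹ • ∑ j : Fin J, a w j‖) ≤ ξ := by
  obtain ⟨w, hw, hsup⟩ := Finset.exists_mem_eq_sup' hReg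
    (fun w => ‖(J : ℝ)⁻¹ • ∑ j : Fin J, a w j‖)
  rw [hsup]
  have hK : K ≠ 0 := Nat.pos_iff_ne_zero.mp (cls w).pos
  have hK1 : (1:ℝ) ≤ (K:ℝ) := by exact_mod_cast Nat.one_le_iff_ne_zero.mpr hK
  have hR1 : (1:ℝ) ≤ (Reg.card:ℝ) := by exact_mod_cast hReg.card_pos
  have hu0 : (0:ℝ) ≤ (K:ℝ)⁻¹ := by positivity
  have hu1 : (K:ℝ)⁻¹ ≤ 1 := by
    rw [inv_le_one_iff₀]; right; exact hK1
  have hr0 : (0:ℝ) ≤ (Reg.card:ℝ)⁻¹ := by positivity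
  have hr1 : (Reg.card:ℝ)⁻¹ ≤ 1 := by
    rw [inv_le_one_iff₀]; right; exact hR1
  set c : ℝ := (1 - (Reg.card : ℝ)⁻¹) * (1 - (K : ℝ)⁻¹) with hc_def
  have hc : 0 ≤ c := mul_nonneg (by linarith) (by linarith)
  -- the gradient difference at 0
  set D : EuclideanSpace ℝ (Fin K × Fin d) :=
    gw K d J (a w) (cls w) - (Reg.card:ℝ)⁻¹ • ∑ v ∈ Reg, gw K d J (a v) (cls v) with hD_def
  have hgrad : ‖D‖ ≤ ξ := by
    have := hξ 0 w hw
    rwa [(grad_localCost hK (a w) (cls w)).gradient,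
      (grad_global hK Reg a cls).gradient] at this
  set t : EuclideanSpace ℝ (Fin d) := (J:ℝ)⁻¹ • ∑ j : Fin J, a w j with ht_def
  have ht_apply : ∀ i, t i = (J:ℝ)⁻¹ * ∑ j : Fin J, a w j i := by
    intro i
    simp [ht_def, PiLp.smul_apply, euc_sum_apply]
  have ht0 : ∀ i, 0 ≤ t i := by
    intro i
    rw [ht_apply]
    exact mul_nonneg (by positivity) (Finset.sum_nonneg fun j _ => ha w j i)
  -- entrywise bound at block `cls w`
  have key : ∀ i : Fin d, c ^ 2 * t i ^ 2 ≤ D (cls w, i) ^ 2 := by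
    intro i
    have hDapply : D (cls w, i) =
        ((K:ℝ)⁻¹ - 1) * t i - (Reg.card:ℝ)⁻¹ *
          ∑ v ∈ Reg, ((K:ℝ)⁻¹ - if cls w = cls v then 1 else 0) *
            ((J:ℝ)⁻¹ * ∑ j : Fin J, a v j i) := by
      simp only [hD_def, PiLp.sub_apply, PiLp.smul_apply, euc_sum_apply, gw_apply,
        smul_eq_mul]
      rw [ht_apply]
      norm_num
    set S : ℝ := ∑ v ∈ Reg, ((J:ℝ)⁻¹ * ∑ j : Fin J, a v j i) with hS_def
    have hsplit : ∑ v ∈ Reg, ((K:ℝ)⁻¹ - if cls w = cls v then 1 else 0) *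
        ((J:ℝ)⁻¹ * ∑ j : Fin J, a v j i) = (K:ℝ)⁻¹ * S - t i := by
      have : ∀ v ∈ Reg, ((K:ℝ)⁻¹ - if cls w = cls v then 1 else 0) *
          ((J:ℝ)⁻¹ * ∑ j : Fin J, a v j i) =
          (K:ℝ)⁻¹ * ((J:ℝ)⁻¹ * ∑ j : Fin J, a v j i) -
            (if cls w = cls v then ((J:ℝ)⁻¹ * ∑ j : Fin J, a v j i) else 0) := by
        intro v _
        by_cases h : cls w = cls v <;> simp [h] <;> ring
      rw [Finset.sum_congr rfl this, Finset.sum_sub_distrib, ← Finset.mul_sum, ← hS_def]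
      congr 1
      rw [Finset.sum_eq_single_of_mem w hw]
      · simp [ht_apply]
      · intro v hv hvw
        have : cls w ≠ cls v := fun h => hvw ((hcls v hv w hw h.symm))
        simp [this]
    rw [hDapply, hsplit]
    have hSt : t i ≤ S := by
      rw [ht_apply]
      exact Finset.single_le_sum (f := fun v => (J:ℝ)⁻¹ * ∑ j : Fin J, a v j i)
        (fun v _ => mul_nonneg (by positivity) (Finset.sum_nonneg fun j _ => ha v j i)) hw
    have hDle : c * t i ≤ -(((K:ℝ)⁻¹ - 1) * t i - (Reg.card:ℝ)⁻¹ * ((K:ℝ)⁻¹ * S - t i)) := by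
      have h1 : -(((K:ℝ)⁻¹ - 1) * t i - (Reg.card:ℝ)⁻¹ * ((K:ℝ)⁻¹ * S - t i)) - c * t i =
          (Reg.card:ℝ)⁻¹ * (K:ℝ)⁻¹ * (S - t i) := by
        rw [hc_def]; ring
      nlinarith [mul_nonneg (mul_nonneg hr0 hu0) (sub_nonneg.mpr hSt)]
    calc c ^ 2 * t i ^ 2 = (c * t i) ^ 2 := by ring
      _ ≤ (-(((K:ℝ)⁻¹ - 1) * t i - (Reg.card:ℝ)⁻¹ * ((K:ℝ)⁻¹ * S - t i))) ^ 2 :=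
          pow_le_pow_left₀ (mul_nonneg hc (ht0 i)) hDle 2
      _ = (((K:ℝ)⁻¹ - 1) * t i - (Reg.card:ℝ)⁻¹ * ((K:ℝ)⁻¹ * S - t i)) ^ 2 := by ring
  -- norm bound
  have hnorm : c * ‖t‖ ≤ ‖D‖ := by
    have hsq : (c * ‖t‖) ^ 2 ≤ ‖D‖ ^ 2 := by
      rw [mul_pow, euc_norm_sq, euc_norm_sq, Finset.mul_sum]
      calc ∑ i, c ^ 2 * t i ^ 2 ≤ ∑ i, D (cls w, i) ^ 2 :=
            Finset.sum_le_sum fun i _ => key i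
        _ ≤ ∑ p : Fin K × Fin d, D p ^ 2 := by
            rw [Fintype.sum_prod_type]
            exact Finset.single_le_sum (f := fun l => ∑ i : Fin d, D (l, i) ^ 2)
              (fun l _ => Finset.sum_nonneg fun i _ => sq_nonneg _) (Finset.mem_univ (cls w))
    calc c * ‖t‖ = Real.sqrt ((c * ‖t‖) ^ 2) :=
          (Real.sqrt_sq (mul_nonneg hc (norm_nonneg _))).symm
      _ ≤ Real.sqrt (‖D‖ ^ 2) := Real.sqrt_le_sqrt hsq
      _ = ‖D‖ := Real.sqrt_sq (norm_nonneg _)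
  exact le_trans hnorm hgrad
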